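/- arXiv:1510.05555 — 4 statements merged into one kernel-verified Lean document; each statement's English description precedes it below -/
import Mathlib

section
/- Let G be a finite graph, Sch a well-defined ShEx schema, and (typing_cert, lw_cert) a global typing witness for G by Sch that is total on negated shapes, i.e. for every node n and every S ∈ negated-shapes(Sch), either (n, S) or (n, !S) belongs to typing_cert. Then for every global typing witness (typing, lw) for G by Sch, every shape label S ∈ negated-shapes(Sch), and every node n: if (n, S) ∈ typing then (n, S) ∈ typing_cert, and if (n, !S) ∈ typing then (n, !S) ∈ typing_cert. -/
/-! Common formalization of ShEx schemas, graphs, local witnesses and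
global typing witnesses. -/

/-- A possibly inverse property: `fwd p` is the property `p`,
`inv p` is the inverse property `^p`. -/
inductive Step (P : Type) where
  | fwd (p : P)
  | inv (p : P)

/-- An edge `(n, q, n')` of the graph abstraction of an RDF graph. -/
abbrev Edge (N P : Type) := N × Step P × N

/-- A finite graph: finite sets of nodes and edges, a value function, and
closure under taking inverse edges. -/
structure ShExGraph (N P V : Type) where
  nodes : Set N
  edges : Set (Edge N P)
  val : N → V
  nodes_finite : nodes.Finite
  edges_finite : edges.Finite
  edge_src_mem : ∀ e ∈ edges, e.1 ∈ nodes
  edge_tgt_mem : ∀ e ∈ edges, e.2.2 ∈ nodes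
  fwd_inv : ∀ n p n', (n, Step.fwd p, n') ∈ edges → (n', Step.inv p, n) ∈ edges
  inv_fwd : ∀ n p n', (n, Step.inv p, n') ∈ edges → (n', Step.fwd p, n) ∈ edges

/-- The neighbourhood of a node: all adjacent edges (with source that node). -/
def ShExGraph.neigh {N P V : Type} (G : ShExGraph N P V) (n : N) : Set (Edge N P) :=
  {e ∈ G.edges | e.1 = n}

/-- A forward edge: labelled by a (non-inverse) property. -/
def Edge.isFwd {N P : Type} (e : Edge N P) : Prop := ∃ p, e.2.1 = Step.fwd p

/-- An inverse edge: labelled by an inverse property. -/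
def Edge.isInv {N P : Type} (e : Edge N P) : Prop := ∃ p, e.2.1 = Step.inv p

/-- Atomic constraints of a value class: a value set, a shape label `T`,
or a negated shape label `!T`. -/
inductive Atom (L V : Type) where
  | valueSet (vs : Set V)
  | shape (T : L)
  | negShape (T : L)

/-- The content of a triple-constraint occurrence: its (possibly inverse)
property and its list of conjuncts. -/
structure TCContent (P L V : Type) where
  prop : Step P
  conjuncts : List (Atom L V)

/-- Shape expressions, with triple-constraint occurrences drawn from a type `C`
of occurrence names (distinct occurrences are distinguished). -/
inductive SExpr (C : Type) where
  | empty
  | tc (c : C)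
  | someOf (e₁ e₂ : SExpr C)
  | group (e₁ e₂ : SExpr C)
  | rep (e : SExpr C) (lo : ℕ) (hi : ℕ∞)

/-- The triple-constraint occurrence `c` occurs in a shape expression. -/
def occursIn {C : Type} (c : C) : SExpr C → Prop
  | .empty => False
  | .tc c' => c = c'
  | .someOf e₁ e₂ => occursIn c e₁ ∨ occursIn c e₂
  | .group e₁ e₂ => occursIn c e₁ ∨ occursIn c e₂
  | .rep e _ _ => occursIn c e

/-- Triple consumers: `tc c` for a triple-constraint occurrence `c`,
`extra q` for an extra (possibly inverse) property `q`, and `opn` (open). -/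
inductive Consumer (C P : Type) where
  | tc (c : C)
  | extra (q : Step P)
  | opn

/-- A shape definition: optional CLOSED / ^CLOSED flags, a finite set of extra
(possibly inverse) properties, and a shape expression. -/
structure ShapeDef (C P L V : Type) where
  closed : Bool
  invClosed : Bool
  extra : Set (Step P)
  extra_finite : extra.Finite
  expr : SExpr C

/-- A ShEx schema: a shape definition for every shape label, and the content
of every triple-constraint occurrence. -/
structure Schema (C P L V : Type) where
  defn : L → ShapeDef C P L V
  content : C → TCContent P L V

/-- The subset of `Neigh` of edges mapped to consumers of triple-constraint
occurrences occurring in the expression `e`. -/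
def exprEdges {N P C : Type} (w : Edge N P → Consumer C P) (e : SExpr C)
    (Neigh : Set (Edge N P)) : Set (Edge N P) :=
  {x ∈ Neigh | ∃ c, w x = Consumer.tc c ∧ occursIn c e}

/-- The satisfaction relation `witness, Neigh ⊢ Expr`. -/
def Sat {N P C : Type} (w : Edge N P → Consumer C P) : SExpr C → Set (Edge N P) → Prop
  | .empty, Neigh => Neigh = ∅
  | .tc c, Neigh => ∃ x, Neigh = {x} ∧ w x = Consumer.tc c
  | .someOf e₁ e₂, Neigh => Sat w e₁ Neigh ∨ Sat w e₂ Neigh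
  | .group e₁ e₂, Neigh =>
      Neigh = exprEdges w e₁ Neigh ∪ exprEdges w e₂ Neigh ∧
      Sat w e₁ (exprEdges w e₁ Neigh) ∧ Sat w e₂ (exprEdges w e₂ Neigh)
  | .rep e lo hi, Neigh => ∃ m : ℕ, lo ≤ m ∧ (m : ℕ∞) ≤ hi ∧
      ∃ f : Fin m → Set (Edge N P),
        (∀ i j, i ≠ j → Disjoint (f i) (f j)) ∧ (⋃ i, f i) = Neigh ∧
        ∀ i, Sat w e (f i)

/-- An edge matches the consumer of the triple-constraint occurrence `c`:
same property, and the target value belongs to every value-set conjunct. -/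
def matchesTC {N P C L V : Type} (val : N → V) (content : C → TCContent P L V)
    (e : Edge N P) (c : C) : Prop :=
  (content c).prop = e.2.1 ∧
  ∀ vs : Set V, Atom.valueSet vs ∈ (content c).conjuncts → val e.2.2 ∈ vs

/-- `w` is a local witness for the fact that node `n` satisfies the shape
definition `D` (in the graph `G`, with occurrence contents from `Sch`). -/
def IsLocalWitness {N P V C L : Type} (G : ShExGraph N P V) (Sch : Schema C P L V)
    (D : ShapeDef C P L V) (n : N) (w : Edge N P → Consumer C P) : Prop :=
  (∀ e ∈ G.neigh n,
    -- (i) consumers are consumers of D, and matched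
    (∀ c, w e = Consumer.tc c → occursIn c D.expr ∧ matchesTC G.val Sch.content e c) ∧
    (∀ q, w e = Consumer.extra q → q ∈ D.extra ∧ e.2.1 = q) ∧
    -- (ii) an extra-consumed edge matches no all-value-set triple constraint
    (∀ q, w e = Consumer.extra q →
      ¬ ∃ c, occursIn c D.expr ∧
        (∀ a ∈ (Sch.content c).conjuncts, ∃ vs, a = Atom.valueSet vs) ∧
        matchesTC G.val Sch.content e c) ∧
    -- (iii) an open-consumed edge has a property mentioned nowhere in D
    (w e = Consumer.opn →
      (¬ ∃ c, occursIn c D.expr ∧ (Sch.content c).prop = e.2.1) ∧ e.2.1 ∉ D.extra)) ∧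
  -- (iv) closedness conditions
  (D.closed = true → ∀ e ∈ G.neigh n, Edge.isFwd e → w e ≠ Consumer.opn) ∧
  (D.invClosed = true → ∀ e ∈ G.neigh n, Edge.isInv e → w e ≠ Consumer.opn) ∧
  -- (v) the triple-constraint-consumed edges satisfy the expression
  Sat w D.expr {e ∈ G.neigh n | ∃ c, w e = Consumer.tc c}

/-- A signed shape label: `(S, true)` is `S`, `(S, false)` is `!S`. -/
abbrev SLabel (L : Type) := L × Bool

/-- A typing candidate: a set of pairs of a node and a signed shape label. -/
abbrev Typing (N L : Type) := Set (N × SLabel L)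

/-- A family assigning a (candidate) local witness to every node and shape label. -/
abbrev LWFam (N P L C : Type) := N → L → Edge N P → Consumer C P

/-- A typing of `G`: only nodes of `G`, and no contradictory pairs. -/
def IsTyping {N P V L : Type} (G : ShExGraph N P V) (t : Typing N L) : Prop :=
  (∀ x ∈ t, x.1 ∈ G.nodes) ∧
  ∀ (n : N) (S : L), ¬ ((n, (S, true)) ∈ t ∧ (n, (S, false)) ∈ t)

/-- The signed shape label determined by an atomic constraint, if any. -/
def atomSigned {L V : Type} : Atom L V → Option (SLabel L)
  | .valueSet _ => none
  | .shape T => some (T, true)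
  | .negShape T => some (T, false)

/-- The propagation of a local witness with domain `Neigh`. -/
def propagation {N P C L V : Type} (Sch : Schema C P L V) (Neigh : Set (Edge N P))
    (w : Edge N P → Consumer C P) : Typing N L :=
  {x | ∃ e ∈ Neigh, ∃ c, w e = Consumer.tc c ∧ e.2.2 = x.1 ∧
       ∃ a ∈ (Sch.content c).conjuncts, atomSigned a = some x.2}

/-- One unfolding of the recursive definition of a global typing witness;
`Inner` stands for the inner (recursive) references to the notion of a global
typing witness in conditions gtw-neg and gtw-extra. -/
def GTWCond {N P V C L : Type} (G : ShExGraph N P V) (Sch : Schema C P L V)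
    (Inner : Typing N L → LWFam N P L C → Prop)
    (typing : Typing N L) (lw : LWFam N P L C) : Prop :=
  IsTyping G typing ∧
  -- lw gives local witnesses; (gtw-sat) propagation is included in the typing
  (∀ n S, (n, (S, true)) ∈ typing →
    IsLocalWitness G Sch (Sch.defn S) n (lw n S) ∧
    propagation Sch (G.neigh n) (lw n S) ⊆ typing) ∧
  -- (gtw-neg)
  (∀ n S, (n, (S, false)) ∈ typing → ¬ ∃ t' l', Inner t' l' ∧ (n, (S, true)) ∈ t') ∧
  -- (gtw-extra)
  (∀ n S, (n, (S, true)) ∈ typing → ∀ e ∈ G.neigh n, ∀ q, lw n S e = Consumer.extra q →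
    ∀ c, occursIn c (Sch.defn S).expr → (Sch.content c).prop = q →
      ∃ a ∈ (Sch.content c).conjuncts,
        (∃ vs, a = Atom.valueSet vs ∧ G.val e.2.2 ∉ vs) ∨
        (∃ T, a = Atom.shape T ∧ ∃ t'' l'', Inner t'' l'' ∧ (e.2.2, (T, false)) ∈ t'') ∨
        (∃ T, a = Atom.negShape T ∧ ∃ t'' l'', Inner t'' l'' ∧ (e.2.2, (T, true)) ∈ t''))

/-- `GTW` is *the* notion of global typing witness for `G` by `Sch`: a predicate
satisfying the recursive defining equations (which, for well-defined schemas,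
determine it uniquely). -/
def IsGTWFamily {N P V C L : Type} (G : ShExGraph N P V) (Sch : Schema C P L V)
    (GTW : Typing N L → LWFam N P L C → Prop) : Prop :=
  ∀ t l, GTW t l ↔ GTWCond G Sch GTW t l

/-- Edge of the dependency graph of a schema: `T` occurs in some triple
constraint of `expr(S)`. -/
def depEdge {C P L V : Type} (Sch : Schema C P L V) (S T : L) : Prop :=
  ∃ c, occursIn c (Sch.defn S).expr ∧
    (Atom.shape T ∈ (Sch.content c).conjuncts ∨
     Atom.negShape T ∈ (Sch.content c).conjuncts)

/-- `T` appears negated in some shape definition of the schema. -/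
def AppearsNegated {C P L V : Type} (Sch : Schema C P L V) (T : L) : Prop :=
  ∃ S c, occursIn c (Sch.defn S).expr ∧
    ((Atom.negShape T : Atom L V) ∈ (Sch.content c).conjuncts ∨
     ((Sch.content c).prop ∈ (Sch.defn S).extra ∧
      (Atom.shape T : Atom L V) ∈ (Sch.content c).conjuncts))

/-- Well-defined schema: from every shape label that appears negated, the
reachable part of the dependency graph is acyclic. -/
def WellDefined {C P L V : Type} (Sch : Schema C P L V) : Prop :=
  ∀ T, AppearsNegated Sch T →
    ∀ U, Relation.ReflTransGen (depEdge Sch) T U → ¬ Relation.TransGen (depEdge Sch) U U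

/-- A typing is total on negated shapes: every node of `G` is typed with `S`
or `!S` for every shape label `S` appearing negated in the schema. -/
def TotalOnNegated {N P V C L : Type} (G : ShExGraph N P V) (Sch : Schema C P L V)
    (t : Typing N L) : Prop :=
  ∀ n ∈ G.nodes, ∀ S, AppearsNegated Sch S →
    (n, (S, true)) ∈ t ∨ (n, (S, false)) ∈ t

/-- Corollary: every global typing witness agrees with the
certain typing `typing_cert` (total on negated shapes) on the shape labels that
appear negated in the schema. -/
theorem statement_1 {N P V C L : Type} [Finite L]
    (G : ShExGraph N P V) (Sch : Schema C P L V) (hwd : WellDefined Sch)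
    (GTW : Typing N L → LWFam N P L C → Prop) (hGTW : IsGTWFamily G Sch GTW)
    (tcert : Typing N L) (lwcert : LWFam N P L C)
    (hcert : GTW tcert lwcert) (htot : TotalOnNegated G Sch tcert) :
    ∀ (typing : Typing N L) (lw : LWFam N P L C), GTW typing lw →
      ∀ S, AppearsNegated Sch S → ∀ n ∈ G.nodes,
        ((n, (S, true)) ∈ typing → (n, (S, true)) ∈ tcert) ∧
        ((n, (S, false)) ∈ typing → (n, (S, false)) ∈ tcert) := by
  intro typing lw htyp S hSneg n hn
  have hcertC := (hGTW tcert lwcert).mp hcert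
  have htypC := (hGTW typing lw).mp htyp
  constructor
  · intro hpos
    rcases htot n hn S hSneg with h | h
    · exact h
    · exact absurd ⟨typing, lw, htyp, hpos⟩ (hcertC.2.2.1 n S h)
  · intro hneg
    rcases htot n hn S hSneg with h | h
    · exact absurd ⟨tcert, lwcert, hcert, h⟩ (htypC.2.2.1 n S hneg)
    · exact h
end

section
/- Let G be a finite graph and Sch a well-defined ShEx schema. If (typing1, lw1) and (typing2, lw2) are two global typing witnesses for G by Sch that are both total on negated shapes (for every node n and every S ∈ negated-shapes(Sch), each of typing1 and typing2 contains (n, S) or (n, !S)), then they agree on the negated shapes: for every node n and every S ∈ negated-shapes(Sch), (n, S) ∈ typing1 if and only if (n, S) ∈ typing2, and (n, !S) ∈ typing1 if and only if (n, !S) ∈ typing2. -/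
/-- two global typing witnesses that are both total on
negated shapes agree on the negated shapes. -/
theorem statement_2 {N P V C L : Type} [Finite L]
    (G : ShExGraph N P V) (Sch : Schema C P L V) (hwd : WellDefined Sch)
    (GTW : Typing N L → LWFam N P L C → Prop) (hGTW : IsGTWFamily G Sch GTW)
    (t₁ t₂ : Typing N L) (l₁ l₂ : LWFam N P L C)
    (h₁ : GTW t₁ l₁) (h₂ : GTW t₂ l₂)
    (htot₁ : TotalOnNegated G Sch t₁) (htot₂ : TotalOnNegated G Sch t₂) :
    ∀ n ∈ G.nodes, ∀ S, AppearsNegated Sch S →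
      (((n, (S, true)) ∈ t₁ ↔ (n, (S, true)) ∈ t₂) ∧
       ((n, (S, false)) ∈ t₁ ↔ (n, (S, false)) ∈ t₂)) := by
  intro n hn S hS
  obtain ⟨_, _, hneg₁, _⟩ := (hGTW t₁ l₁).mp h₁
  obtain ⟨_, _, hneg₂, _⟩ := (hGTW t₂ l₂).mp h₂
  constructor
  · constructor
    · intro h
      rcases htot₂ n hn S hS with h' | h'
      · exact h'
      · exact absurd ⟨t₁, l₁, h₁, h⟩ (hneg₂ n S h')
    · intro h
      rcases htot₁ n hn S hS with h' | h'
      · exact h'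
      · exact absurd ⟨t₂, l₂, h₂, h⟩ (hneg₁ n S h')
  · constructor
    · intro h
      rcases htot₂ n hn S hS with h' | h'
      · exact absurd ⟨t₂, l₂, h₂, h'⟩ (hneg₁ n S h)
      · exact h'
    · intro h
      rcases htot₁ n hn S hS with h' | h'
      · exact absurd ⟨t₁, l₁, h₁, h'⟩ (hneg₂ n S h)
      · exact h'
end

section
/- Let G be a finite graph, Sch a well-defined ShEx schema, and S a shape label such that no shape label occurs in definition(S) (neither in expr(S) nor, consequently, as a shape-constraint conjunct of any triple constraint whose property is extra); i.e. S is a sink of the dependency graph. Define typing_S to contain, for each node n of G, the pair (n, S) if there exists a local witness for the fact that n satisfies definition(S), and the pair (n, !S) otherwise, and let lw_S assign to each (n, S) ∈ typing_S such a local witness. Then (typing_S, lw_S) is a global typing witness for G by Sch. -/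
/-- for a shape label `S` that is a sink of the dependency
graph (no shape label occurs in `definition(S)`), the typing which assigns
`(n, S)` to each node admitting a local witness for `definition(S)` and
`(n, !S)` to every other node, together with a choice of such local witnesses,
is a global typing witness for `G` by `Sch`. -/
theorem statement_4 {N P V C L : Type} [Finite L]
    (G : ShExGraph N P V) (Sch : Schema C P L V) (hwd : WellDefined Sch)
    (GTW : Typing N L → LWFam N P L C → Prop) (hGTW : IsGTWFamily G Sch GTW)
    (S : L)
    (hsink : ∀ c, occursIn c (Sch.defn S).expr →
      ∀ a ∈ (Sch.content c).conjuncts, ∀ T : L, a ≠ Atom.shape T ∧ a ≠ Atom.negShape T)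
    (lw : LWFam N P L C)
    (hlw : ∀ n ∈ G.nodes, (∃ w, IsLocalWitness G Sch (Sch.defn S) n w) →
      IsLocalWitness G Sch (Sch.defn S) n (lw n S)) :
    GTW {x : N × SLabel L | x.1 ∈ G.nodes ∧
        ((x.2 = (S, true) ∧ ∃ w, IsLocalWitness G Sch (Sch.defn S) x.1 w) ∨
         (x.2 = (S, false) ∧ ¬ ∃ w, IsLocalWitness G Sch (Sch.defn S) x.1 w))} lw := by
  rw [hGTW]
  refine ⟨⟨fun x hx => hx.1, ?_⟩, ?_, ?_, ?_⟩
  · rintro n S' ⟨⟨_, hp | hp⟩, ⟨_, hq | hq⟩⟩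
    · exact absurd hq.1 (by simp)
    · obtain ⟨hS1, hw⟩ := hp
      obtain ⟨hS2, hnw⟩ := hq
      cases Prod.mk.injEq .. ▸ hS1 with
      | intro h1 _ => cases Prod.mk.injEq .. ▸ hS2 with
        | intro h2 _ => exact hnw (h2 ▸ h1 ▸ hw)
    · exact absurd hp.1 (by simp)
    · exact absurd hp.1 (by simp)
  · rintro n S' ⟨hn, ⟨hS', hw⟩ | ⟨hS', _⟩⟩
    · obtain ⟨h1, _⟩ := Prod.mk.injEq .. ▸ hS'
      subst h1
      refine ⟨hlw n hn hw, ?_⟩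
      rintro ⟨n', X⟩ ⟨e, he, c, hc, _, a, ha, hsa⟩
      exfalso
      have hocc := ((hlw n hn hw).1 e he).1 c hc |>.1
      obtain ⟨T, hT⟩ : ∃ T : L, a = Atom.shape T ∨ a = Atom.negShape T := by
        cases a with
        | valueSet vs => simp [atomSigned] at hsa
        | shape T => exact ⟨T, Or.inl rfl⟩
        | negShape T => exact ⟨T, Or.inr rfl⟩
      rcases hT with h | h
      · exact (hsink c hocc a ha T).1 h
      · exact (hsink c hocc a ha T).2 h
    · exact absurd hS' (by simp)
  · rintro n S' ⟨hn, ⟨hS', _⟩ | ⟨hS', hnw⟩⟩ ⟨t', l', hgtw', hmem⟩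
    · exact absurd hS' (by simp)
    · obtain ⟨h1, _⟩ := Prod.mk.injEq .. ▸ hS'
      subst h1
      have := ((hGTW t' l').mp hgtw').2.1 n S' hmem |>.1
      exact hnw ⟨_, this⟩
  · rintro n S' ⟨hn, ⟨hS', hw⟩ | ⟨hS', _⟩⟩ e he q hq c hocc hprop
    · obtain ⟨h1, _⟩ := Prod.mk.injEq .. ▸ hS'
      subst h1
      have hlwn := hlw n hn hw
      obtain ⟨hcons, _⟩ := hlwn
      have hextra := (hcons e he).2.1 q hq
      have hnotall := (hcons e he).2.2.1 q hq
      -- every conjunct of c is a value set, by hsink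
      have hallvs : ∀ a ∈ (Sch.content c).conjuncts, ∃ vs, a = Atom.valueSet vs := by
        intro a ha
        cases a with
        | valueSet vs => exact ⟨vs, rfl⟩
        | shape T => exact absurd rfl (hsink c hocc _ ha T).1
        | negShape T => exact absurd rfl (hsink c hocc _ ha T).2
      have hnm : ¬ matchesTC G.val Sch.content e c := by
        intro hm
        exact hnotall ⟨c, hocc, hallvs, hm⟩
      rw [matchesTC] at hnm
      push_neg at hnm
      obtain ⟨vs, hvs, hval⟩ := hnm (hextra.2 ▸ hprop)
      exact ⟨Atom.valueSet vs, hvs, Or.inl ⟨vs, rfl, hval⟩⟩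
    · exact absurd hS' (by simp)
end

section
/- Let E be a shape expression and min ≤ max natural numbers (max finite). Let U be the group shape expression consisting of min copies of E followed by (max − min) copies of E[0;1], where each copy uses fresh, pairwise distinct triple-constraint occurrences that are renamings of those of E, and let π be the map sending each consumer of a copied occurrence back to the consumer of the original occurrence in E. Then for every set Neigh of neighbourhood edges: there exists a map witness from Neigh to the consumers of the occurrences of E such that witness, Neigh ⊢ E[min;max] if and only if there exists a map witness' from Neigh to the consumers of the occurrences of U such that witness', Neigh ⊢ U; moreover witness can be taken to be π ∘ witness'. -/
/-- Renaming of triple-constraint occurrences in a shape expression. -/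
def SExpr.rename {C C' : Type} (f : C → C') : SExpr C → SExpr C'
  | .empty => .empty
  | .tc c => .tc (f c)
  | .someOf e₁ e₂ => .someOf (rename f e₁) (rename f e₂)
  | .group e₁ e₂ => .group (rename f e₁) (rename f e₂)
  | .rep e lo hi => .rep (rename f e) lo hi

/-- Renaming of occurrences in a triple consumer. -/
def Consumer.rename {C C' P : Type} (f : C → C') : Consumer C P → Consumer C' P
  | .tc c => .tc (f c)
  | .extra q => .extra q
  | .opn => .opn

/-- Group of a list of shape expressions. -/
def groupList {C : Type} : List (SExpr C) → SExpr C
  | [] => .empty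
  | [e] => e
  | e :: es => .group e (groupList es)

/-- The unfolding of the repetition `E[lo;hi]` (with `hi` finite): the group of
`lo` copies of `E` followed by `hi - lo` copies of `E[0;1]`, each copy using
fresh pairwise distinct occurrences `(i, c)` renaming the occurrences `c` of
`E`; the projection `Prod.snd` sends each copied occurrence back to the
original one. -/
def unfoldExpr {C : Type} (E : SExpr C) (lo hi : ℕ) : SExpr (Fin hi × C) :=
  groupList ((List.finRange hi).map fun i =>
    if i.val < lo then E.rename (fun c => (i, c))
    else SExpr.rep (E.rename fun c => (i, c)) 0 1)

section Aux

variable {N P C C' : Type}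

lemma occursIn_rename (f : C → C') (e : SExpr C) (c' : C') :
    occursIn c' (e.rename f) ↔ ∃ c, occursIn c e ∧ c' = f c := by
  induction e with
  | empty => simp [SExpr.rename, occursIn]
  | tc c => simp [SExpr.rename, occursIn]
  | someOf e₁ e₂ ih₁ ih₂ => simp [SExpr.rename, occursIn, ih₁, ih₂]; aesop
  | group e₁ e₂ ih₁ ih₂ => simp [SExpr.rename, occursIn, ih₁, ih₂]; aesop
  | rep e lo hi ih => simpa [SExpr.rename, occursIn] using ih

lemma occursIn_groupList (c : C) :
    ∀ es : List (SExpr C), occursIn c (groupList es) ↔ ∃ e ∈ es, occursIn c e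
  | [] => by simp [groupList, occursIn]
  | [e] => by simp [groupList]
  | e :: e₂ :: es => by
      have := occursIn_groupList c (e₂ :: es)
      simp [groupList, occursIn, this]

lemma exprEdges_subset (w : Edge N P → Consumer C P) (e : SExpr C) (X : Set (Edge N P)) :
    exprEdges w e X ⊆ X := fun _ hx => hx.1

lemma exprEdges_mono_set {w : Edge N P → Consumer C P} {e : SExpr C}
    {X Y : Set (Edge N P)} (h : Y ⊆ X) : exprEdges w e Y ⊆ exprEdges w e X :=
  fun x hx => ⟨h hx.1, hx.2⟩

lemma exprEdges_mono_occ {w : Edge N P → Consumer C P} {e e' : SExpr C}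
    (h : ∀ c, occursIn c e → occursIn c e') (X : Set (Edge N P)) :
    exprEdges w e X ⊆ exprEdges w e' X := by
  rintro x ⟨hx, c, hc, ho⟩; exact ⟨hx, c, hc, h c ho⟩

lemma exprEdges_exprEdges {w : Edge N P → Consumer C P} {e' E : SExpr C}
    (h : ∀ c, occursIn c e' → occursIn c E) (X : Set (Edge N P)) :
    exprEdges w e' (exprEdges w E X) = exprEdges w e' X := by
  ext x
  constructor
  · rintro ⟨⟨hx, _⟩, hc⟩; exact ⟨hx, hc⟩
  · rintro ⟨hx, c, hc, ho⟩; exact ⟨⟨hx, c, hc, h c ho⟩, c, hc, ho⟩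

lemma eq_exprEdges_of_sat {w : Edge N P → Consumer C P} :
    ∀ (e : SExpr C) (X : Set (Edge N P)), Sat w e X → X = exprEdges w e X := by
  intro e
  induction e with
  | empty =>
      intro X h; rw [show X = (∅ : Set (Edge N P)) from h]
      ext x; simp [exprEdges]
  | tc c =>
      intro X h
      obtain ⟨x, rfl, hx⟩ := h
      apply Set.Subset.antisymm _ (exprEdges_subset _ _ _)
      rintro y (rfl : y = x)
      exact ⟨rfl, c, hx, rfl⟩
  | someOf e₁ e₂ ih₁ ih₂ =>
      intro X h
      apply Set.Subset.antisymm _ (exprEdges_subset _ _ _)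
      intro x hx
      rcases h with h | h
      · rw [ih₁ X h] at hx
        obtain ⟨hx1, c, hc, ho⟩ := hx
        exact ⟨hx1, c, hc, Or.inl ho⟩
      · rw [ih₂ X h] at hx
        obtain ⟨hx1, c, hc, ho⟩ := hx
        exact ⟨hx1, c, hc, Or.inr ho⟩
  | group e₁ e₂ ih₁ ih₂ =>
      intro X h
      apply Set.Subset.antisymm _ (exprEdges_subset _ _ _)
      intro x hx
      rw [h.1] at hx
      rcases hx with ⟨hx1, c, hc, ho⟩ | ⟨hx1, c, hc, ho⟩
      · exact ⟨hx1, c, hc, Or.inl ho⟩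
      · exact ⟨hx1, c, hc, Or.inr ho⟩
  | rep e lo hi ih =>
      intro X h
      apply Set.Subset.antisymm _ (exprEdges_subset _ _ _)
      obtain ⟨m, _, _, f, _, hun, hsat⟩ := h
      intro x hx
      rw [← hun] at hx
      obtain ⟨_, ⟨i, rfl⟩, hxi⟩ := hx
      have h1 : x ∈ exprEdges w e (f i) := (ih (f i) (hsat i)) ▸ hxi
      have h2 : f i ⊆ X := by rw [← hun]; exact Set.subset_iUnion f i
      exact exprEdges_mono_occ
        (e' := SExpr.rep e lo hi) (fun c hc => hc) X (exprEdges_mono_set h2 h1)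

lemma exprEdges_groupList (w : Edge N P → Consumer C P) (es : List (SExpr C))
    (X : Set (Edge N P)) :
    exprEdges w (groupList es) X = ⋃ e ∈ es, exprEdges w e X := by
  ext x
  simp only [exprEdges, Set.mem_setOf_eq, Set.mem_iUnion, occursIn_groupList]
  aesop

lemma biUnion_cons {α β : Type*} (f : α → Set β) (a : α) (l : List α) :
    ⋃ e ∈ a :: l, f e = f a ∪ ⋃ e ∈ l, f e := by
  simp [List.mem_cons, Set.iUnion_or, Set.iUnion_union_distrib, Set.iUnion_iUnion_eq_left]

lemma sat_groupList {w : Edge N P → Consumer C P} :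
    ∀ (es : List (SExpr C)) (X : Set (Edge N P)),
      Sat w (groupList es) X ↔
        (X = ⋃ e ∈ es, exprEdges w e X) ∧ ∀ e ∈ es, Sat w e (exprEdges w e X)
  | [] => by intro X; simp [groupList, Sat]
  | [e] => by
      intro X
      show Sat w e X ↔ _
      constructor
      · intro h
        have hX := eq_exprEdges_of_sat e X h
        refine ⟨by simpa using hX, ?_⟩
        intro e' he'
        have : e' = e := by simpa using he'
        subst this
        rwa [← hX]
      · rintro ⟨hX, h⟩
        have := h e (by simp)
        rwa [← show X = exprEdges w e X by simpa using hX] at this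
  | e :: e₂ :: es => by
      intro X
      set Y := exprEdges w (groupList (e₂ :: es)) X with hY
      have key : ∀ e' ∈ e₂ :: es, exprEdges w e' Y = exprEdges w e' X := by
        intro e' he'
        exact exprEdges_exprEdges (fun c hc => (occursIn_groupList c _).2 ⟨e', he', hc⟩) X
      have hun : Y = ⋃ e' ∈ e₂ :: es, exprEdges w e' X := exprEdges_groupList w _ X
      have hsatiff : Sat w (groupList (e₂ :: es)) Y ↔
          (∀ e' ∈ e₂ :: es, Sat w e' (exprEdges w e' X)) := by
        rw [sat_groupList (e₂ :: es) Y]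
        constructor
        · rintro ⟨_, h⟩ e' he'; rw [← key e' he']; exact h e' he'
        · intro h
          refine ⟨?_, fun e' he' => by rw [key e' he']; exact h e' he'⟩
          have : (⋃ e' ∈ e₂ :: es, exprEdges w e' Y) = ⋃ e' ∈ e₂ :: es, exprEdges w e' X :=
            Set.iUnion₂_congr key
          rw [this, ← hun]
      have hgl : groupList (e :: e₂ :: es) = SExpr.group e (groupList (e₂ :: es)) := rfl
      rw [hgl]
      show (X = exprEdges w e X ∪ Y ∧ Sat w e (exprEdges w e X) ∧
          Sat w (groupList (e₂ :: es)) Y) ↔ _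
      rw [hsatiff, biUnion_cons, hun]
      simp only [List.forall_mem_cons]

lemma exprEdges_congr {w w₂ : Edge N P → Consumer C P} {X : Set (Edge N P)}
    (h : ∀ x ∈ X, w x = w₂ x) (e : SExpr C) : exprEdges w e X = exprEdges w₂ e X := by
  ext x
  constructor
  · rintro ⟨hx, c, hc, ho⟩; exact ⟨hx, c, (h x hx) ▸ hc, ho⟩
  · rintro ⟨hx, c, hc, ho⟩; exact ⟨hx, c, (h x hx) ▸ hc, ho⟩

lemma sat_congr {w w₂ : Edge N P → Consumer C P} :
    ∀ (e : SExpr C) (X : Set (Edge N P)), (∀ x ∈ X, w x = w₂ x) → Sat w e X → Sat w₂ e X := by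
  intro e
  induction e with
  | empty => intro X _ h; exact h
  | tc c =>
      intro X hag h
      obtain ⟨x, rfl, hx⟩ := h
      exact ⟨x, rfl, (hag x rfl) ▸ hx⟩
  | someOf e₁ e₂ ih₁ ih₂ =>
      intro X hag h
      rcases h with h | h
      · exact Or.inl (ih₁ X hag h)
      · exact Or.inr (ih₂ X hag h)
  | group e₁ e₂ ih₁ ih₂ =>
      intro X hag h
      obtain ⟨h1, h2, h3⟩ := h
      rw [exprEdges_congr hag e₁, exprEdges_congr hag e₂] at *
      exact ⟨h1, ih₁ _ (fun x hx => hag x (exprEdges_subset _ _ _ hx)) h2,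
        ih₂ _ (fun x hx => hag x (exprEdges_subset _ _ _ hx)) h3⟩
  | rep e lo hi ih =>
      intro X hag h
      obtain ⟨m, h1, h2, f, hd, hun, hs⟩ := h
      refine ⟨m, h1, h2, f, hd, hun, fun i => ih (f i) (fun x hx => hag x ?_) (hs i)⟩
      rw [← hun]; exact Set.mem_iUnion.2 ⟨i, hx⟩

/-- Lifting a witness along an injective renaming. -/
lemma sat_rename {f : C → C'} (hf : Function.Injective f) {w : Edge N P → Consumer C P} :
    ∀ (e : SExpr C) (X : Set (Edge N P)), Sat w e X →
      Sat (fun x => Consumer.rename f (w x)) (e.rename f) X := by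
  intro e
  induction e with
  | empty => intro X h; exact h
  | tc c =>
      intro X h
      obtain ⟨x, rfl, hx⟩ := h
      exact ⟨x, rfl, by show Consumer.rename f (w x) = Consumer.tc (f c); rw [hx]; rfl⟩
  | someOf e₁ e₂ ih₁ ih₂ =>
      intro X h
      rcases h with h | h
      · exact Or.inl (ih₁ X h)
      · exact Or.inr (ih₂ X h)
  | group e₁ e₂ ih₁ ih₂ =>
      intro X h
      obtain ⟨h1, h2, h3⟩ := h
      have key : ∀ e' : SExpr C,
          exprEdges (fun x => Consumer.rename f (w x)) (e'.rename f) X = exprEdges w e' X := by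
        intro e'
        ext x
        constructor
        · rintro ⟨hx, c', hc', ho'⟩
          replace hc' : Consumer.rename f (w x) = Consumer.tc c' := hc'
          obtain ⟨c₀, ho₀, rfl⟩ := (occursIn_rename f e' c').1 ho'
          rcases hw : w x with c | q | _ <;> rw [hw] at hc' <;>
            simp [Consumer.rename] at hc'
          exact ⟨hx, c, hw, by rw [hf hc']; exact ho₀⟩
        · rintro ⟨hx, c, hc, ho⟩
          refine ⟨hx, f c, ?_, (occursIn_rename f e' (f c)).2 ⟨c, ho, rfl⟩⟩
          show Consumer.rename f (w x) = Consumer.tc (f c)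
          rw [hc]; rfl
      refine ⟨?_, ?_, ?_⟩
      · rw [key e₁, key e₂]; exact h1
      · rw [key e₁]; exact ih₁ _ h2
      · rw [key e₂]; exact ih₂ _ h3
  | rep e lo hi ih =>
      intro X h
      obtain ⟨m, h1, h2, ff, hd, hun, hs⟩ := h
      exact ⟨m, h1, h2, ff, hd, hun, fun i => ih (ff i) (hs i)⟩

/-- Projecting a witness back along a renaming with a left inverse, assuming
all edges are consumed by renamed occurrences. -/
lemma sat_unrename {f : C → C'} {g : C' → C} (hgf : ∀ c, g (f c) = c)
    {w : Edge N P → Consumer C' P} :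
    ∀ (e : SExpr C) (X : Set (Edge N P)), (∀ x ∈ X, ∃ c, w x = Consumer.tc (f c)) →
      Sat w (e.rename f) X → Sat (fun x => Consumer.rename g (w x)) e X := by
  intro e
  induction e with
  | empty => intro X _ h; exact h
  | tc c =>
      intro X _ h
      obtain ⟨x, rfl, hx⟩ := h
      refine ⟨x, rfl, ?_⟩
      show Consumer.rename g (w x) = Consumer.tc c
      rw [hx]; simp [Consumer.rename, hgf]
  | someOf e₁ e₂ ih₁ ih₂ =>
      intro X hdom h
      rcases h with h | h
      · exact Or.inl (ih₁ X hdom h)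
      · exact Or.inr (ih₂ X hdom h)
  | group e₁ e₂ ih₁ ih₂ =>
      intro X hdom h
      obtain ⟨h1, h2, h3⟩ := h
      have key : ∀ e' : SExpr C,
          exprEdges (fun x => Consumer.rename g (w x)) e' X = exprEdges w (e'.rename f) X := by
        intro e'
        ext x
        constructor
        · rintro ⟨hx, c, hc, ho⟩
          obtain ⟨c₀, hc₀⟩ := hdom x hx
          replace hc : Consumer.rename g (w x) = Consumer.tc c := hc
          rw [hc₀] at hc
          simp [Consumer.rename, hgf] at hc
          subst hc
          exact ⟨hx, _, hc₀, (occursIn_rename f e' _).2 ⟨_, ho, rfl⟩⟩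
        · rintro ⟨hx, c', hc', ho'⟩
          obtain ⟨c₀, ho₀, rfl⟩ := (occursIn_rename f e' c').1 ho'
          refine ⟨hx, c₀, ?_, ho₀⟩
          show Consumer.rename g (w x) = Consumer.tc c₀
          rw [hc']; simp [Consumer.rename, hgf]
      refine ⟨?_, ?_, ?_⟩
      · rw [key e₁, key e₂]; exact h1
      · rw [key e₁]
        exact ih₁ _ (fun x hx => hdom x (exprEdges_subset _ _ _ hx)) h2
      · rw [key e₂]
        exact ih₂ _ (fun x hx => hdom x (exprEdges_subset _ _ _ hx)) h3
  | rep e lo hi ih =>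
      intro X hdom h
      obtain ⟨m, h1, h2, ff, hd, hun, hs⟩ := h
      refine ⟨m, h1, h2, ff, hd, hun, fun i => ih (ff i) (fun x hx => hdom x ?_) (hs i)⟩
      rw [← hun]; exact Set.mem_iUnion.2 ⟨i, hx⟩

/-- Occurrences of the `i`-th copy in the unfolding. -/
lemma occursIn_copy (E : SExpr C) (lo : ℕ) {hi : ℕ} (i : Fin hi) (c' : Fin hi × C) :
    occursIn c'
      (if (i : ℕ) < lo then E.rename (fun c => (i, c))
       else SExpr.rep (E.rename fun c => (i, c)) 0 1) ↔ c'.1 = i ∧ occursIn c'.2 E := by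
  have base : occursIn c' (E.rename (fun c => (i, c))) ↔ c'.1 = i ∧ occursIn c'.2 E := by
    rw [occursIn_rename]
    constructor
    · rintro ⟨c, hc, rfl⟩; exact ⟨rfl, hc⟩
    · rintro ⟨h1, h2⟩; exact ⟨c'.2, h2, by rw [← h1]⟩
  split
  · exact base
  · exact base

lemma occursIn_unfold (E : SExpr C) (lo : ℕ) {hi : ℕ} (c' : Fin hi × C) :
    occursIn c' (unfoldExpr E lo hi) ↔ occursIn c'.2 E := by
  rw [unfoldExpr, occursIn_groupList]
  constructor
  · rintro ⟨e', he', ho⟩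
    obtain ⟨i, _, rfl⟩ := List.mem_map.1 he'
    exact ((occursIn_copy E lo i c').1 ho).2
  · intro h
    refine ⟨_, List.mem_map.2 ⟨c'.1, List.mem_finRange _, rfl⟩, ?_⟩
    exact (occursIn_copy E lo c'.1 c').2 ⟨rfl, h⟩

lemma mem_exprEdges_copy {hi : ℕ} (E : SExpr C) (lo : ℕ)
    (w' : Edge N P → Consumer (Fin hi × C) P) (X : Set (Edge N P)) (i : Fin hi)
    (x : Edge N P) :
    x ∈ exprEdges w'
        (if (i : ℕ) < lo then E.rename (fun c => (i, c))
         else SExpr.rep (E.rename fun c => (i, c)) 0 1) X ↔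
      x ∈ X ∧ ∃ c, occursIn c E ∧ w' x = Consumer.tc (i, c) := by
  constructor
  · rintro ⟨hx, c', htc, ho⟩
    obtain ⟨h1, h2⟩ := (occursIn_copy E lo i c').1 ho
    obtain ⟨a, b⟩ := c'
    cases h1
    exact ⟨hx, b, h2, htc⟩
  · rintro ⟨hx, c, ho, htc⟩
    exact ⟨hx, (i, c), htc, (occursIn_copy E lo i (i, c)).2 ⟨rfl, ho⟩⟩

lemma unfold_biUnion {hi : ℕ} (g : Fin hi → SExpr (Fin hi × C))
    (F : SExpr (Fin hi × C) → Set (Edge N P)) :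
    (⋃ e ∈ (List.finRange hi).map g, F e) = ⋃ i, F (g i) := by
  ext x
  simp only [Set.mem_iUnion, List.mem_map, List.mem_finRange, true_and]
  constructor
  · rintro ⟨e, ⟨i, rfl⟩, hx⟩
    exact ⟨i, hx⟩
  · rintro ⟨i, hx⟩
    exact ⟨g i, ⟨i, rfl⟩, hx⟩

/-- Backward/moreover direction: a witness for the unfolding projects to a
witness for the repetition. -/
lemma unfold_to_rep (E : SExpr C) (lo hi : ℕ) (hle : lo ≤ hi)
    (Neigh : Set (Edge N P)) (w' : Edge N P → Consumer (Fin hi × C) P)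
    (hside : ∀ e ∈ Neigh, ∃ c', occursIn c' (unfoldExpr E lo hi) ∧ w' e = Consumer.tc c')
    (hsat : Sat w' (unfoldExpr E lo hi) Neigh) :
    Sat (fun e => Consumer.rename Prod.snd (w' e)) (SExpr.rep E lo (hi : ℕ∞)) Neigh := by
  classical
  set g : Fin hi → SExpr (Fin hi × C) := fun i =>
    if (i : ℕ) < lo then E.rename (fun c => (i, c))
    else SExpr.rep (E.rename fun c => (i, c)) 0 1 with hg
  have hsatg : Sat w' (groupList ((List.finRange hi).map g)) Neigh := hsat
  obtain ⟨hX, hS⟩ := (sat_groupList _ Neigh).1 hsatg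
  set S : Fin hi → Set (Edge N P) := fun i => exprEdges w' (g i) Neigh with hSdef
  have hSmem : ∀ (i : Fin hi) (x : Edge N P),
      x ∈ S i ↔ x ∈ Neigh ∧ ∃ c, occursIn c E ∧ w' x = Consumer.tc (i, c) :=
    fun i x => mem_exprEdges_copy E lo w' Neigh i x
  have hSsub : ∀ i, S i ⊆ Neigh := fun i => exprEdges_subset _ _ _
  have hdisj : ∀ i j : Fin hi, i ≠ j → Disjoint (S i) (S j) := by
    intro i j hij
    rw [Set.disjoint_left]
    intro x hxi hxj
    obtain ⟨-, c, -, hc⟩ := (hSmem i x).1 hxi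
    obtain ⟨-, c₂, -, hc₂⟩ := (hSmem j x).1 hxj
    rw [hc] at hc₂
    exact hij (congrArg (fun y => (y : Fin hi × C).1) (Consumer.tc.inj hc₂))
  have hNeigh : Neigh = ⋃ i, S i := by
    conv_lhs => rw [hX]
    exact unfold_biUnion g (fun e => exprEdges w' e Neigh)
  have hSat : ∀ i, Sat w' (g i) (S i) :=
    fun i => hS (g i) (List.mem_map.2 ⟨i, List.mem_finRange _, rfl⟩)
  have hE : ∀ i : Fin hi, ((i : ℕ) < lo ∨ (S i).Nonempty) →
      Sat (fun e => Consumer.rename Prod.snd (w' e)) E (S i) := by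
    intro i hi'
    have hdom : ∀ x ∈ S i, ∃ c, w' x = Consumer.tc ((fun c => ((i : Fin hi), c)) c) := by
      intro x hx
      obtain ⟨-, c, -, hc⟩ := (hSmem i x).1 hx
      exact ⟨c, hc⟩
    by_cases hil : (i : ℕ) < lo
    · have hgi : g i = E.rename (fun c => (i, c)) := by rw [hg]; simp [hil]
      exact sat_unrename (fun c => rfl) E (S i) hdom (hgi ▸ hSat i)
    · have hgi : g i = SExpr.rep (E.rename fun c => (i, c)) 0 1 := by rw [hg]; simp [hil]
      have hrep := hgi ▸ hSat i
      obtain ⟨m', -, hm1, ff, -, hun, hsff⟩ := hrep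
      have hm1' : m' ≤ 1 := by exact_mod_cast hm1
      rcases Nat.le_one_iff_eq_zero_or_eq_one.1 hm1' with rfl | rfl
      · exfalso
        rcases hi' with hi' | ⟨x, hx⟩
        · exact hil hi'
        · rw [← hun] at hx
          simp at hx
      · have hff : ff 0 = S i := by
          rw [← hun]
          refine (Set.iUnion_eq_const ?_).symm
          intro i'
          rw [Subsingleton.elim i' (0 : Fin 1)]
        exact sat_unrename (fun c => rfl) E (S i) hdom (hff ▸ hsff 0)
  -- the nonempty / mandatory indices
  set Tf : Finset (Fin hi) :=
    Finset.univ.filter (fun i => (i : ℕ) < lo ∨ (S i).Nonempty) with hTf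
  have hmemTf : ∀ i : Fin hi, i ∈ Tf ↔ ((i : ℕ) < lo ∨ (S i).Nonempty) := by
    intro i; rw [hTf]; simp
  have hlo_m : lo ≤ Tf.card := by
    have h1 : (Finset.univ : Finset (Fin lo)).card ≤ Tf.card := by
      apply Finset.card_le_card_of_injOn (fun j : Fin lo => Fin.castLE hle j)
      · intro j _
        exact (hmemTf _).2 (Or.inl j.2)
      · intro a _ b _ hab
        exact Fin.castLE_injective hle hab
    simpa using h1
  have hm_hi : Tf.card ≤ hi := by simpa using Finset.card_le_univ Tf
  set eqv := Tf.equivFin with heqv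
  refine ⟨Tf.card, hlo_m, by exact_mod_cast hm_hi,
    fun k => S ((eqv.symm k : Tf) : Fin hi), ?_, ?_, ?_⟩
  · intro i j hij
    apply hdisj
    intro h
    exact hij (eqv.symm.injective (Subtype.coe_injective h))
  · apply Set.Subset.antisymm
    · exact Set.iUnion_subset fun k => hSsub _
    · intro x hx
      have hx' := hNeigh ▸ hx
      obtain ⟨_, ⟨i, rfl⟩, hxi⟩ := hx'
      have hiT : i ∈ Tf := (hmemTf i).2 (Or.inr ⟨x, hxi⟩)
      refine Set.mem_iUnion.2 ⟨eqv ⟨i, hiT⟩, ?_⟩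
      rw [Equiv.symm_apply_apply]
      exact hxi
  · intro k
    exact hE _ ((hmemTf _).1 (eqv.symm k).2)

/-- Forward direction: a witness for the repetition yields a witness for the
unfolding. -/
lemma rep_to_unfold (E : SExpr C) (lo hi : ℕ) (hle : lo ≤ hi)
    (Neigh : Set (Edge N P)) (w : Edge N P → Consumer C P)
    (hside : ∀ e ∈ Neigh, ∃ c, occursIn c E ∧ w e = Consumer.tc c)
    (hsat : Sat w (SExpr.rep E lo (hi : ℕ∞)) Neigh) :
    ∃ w' : Edge N P → Consumer (Fin hi × C) P,
      (∀ e ∈ Neigh, ∃ c', occursIn c' (unfoldExpr E lo hi) ∧ w' e = Consumer.tc c') ∧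
      Sat w' (unfoldExpr E lo hi) Neigh := by
  classical
  obtain ⟨m, hlom, hmhi', f, hdisj, hun, hs⟩ := hsat
  have hmhi : m ≤ hi := by exact_mod_cast hmhi'
  have hmem : ∀ (i : Fin m) (x : Edge N P), x ∈ f i → x ∈ Neigh := by
    intro i x hx; rw [← hun]; exact Set.mem_iUnion.2 ⟨i, hx⟩
  have huniq : ∀ (x : Edge N P) (i : Fin m), x ∈ f i → ∀ h : ∃ j, x ∈ f j, h.choose = i := by
    intro x i hx h
    by_contra hne
    exact Set.disjoint_left.1 (hdisj _ _ hne) h.choose_spec hx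
  set w' : Edge N P → Consumer (Fin hi × C) P := fun x =>
    if h : ∃ j, x ∈ f j then
      Consumer.rename (fun c => (Fin.castLE hmhi h.choose, c)) (w x)
    else Consumer.opn with hw'def
  have hval : ∀ (i : Fin m) (x : Edge N P), x ∈ f i →
      ∃ c, occursIn c E ∧ w x = Consumer.tc c ∧
        w' x = Consumer.tc (Fin.castLE hmhi i, c) := by
    intro i x hx
    obtain ⟨c, hoc, hwc⟩ := hside x (hmem i x hx)
    refine ⟨c, hoc, hwc, ?_⟩
    have h : ∃ j, x ∈ f j := ⟨i, hx⟩
    rw [hw'def]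
    simp only [dif_pos h]
    rw [huniq x i hx h, hwc]
    rfl
  set g : Fin hi → SExpr (Fin hi × C) := fun i =>
    if (i : ℕ) < lo then E.rename (fun c => (i, c))
    else SExpr.rep (E.rename fun c => (i, c)) 0 1 with hg
  set S : Fin hi → Set (Edge N P) := fun j => exprEdges w' (g j) Neigh with hSdef
  have hSmem : ∀ (j : Fin hi) (x : Edge N P), x ∈ S j ↔
      x ∈ Neigh ∧ ∃ c, occursIn c E ∧ w' x = Consumer.tc (j, c) :=
    fun j x => mem_exprEdges_copy E lo w' Neigh j x
  have hSeq : ∀ (j : Fin hi) (hj : (j : ℕ) < m), S j = f ⟨(j : ℕ), hj⟩ := by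
    intro j hj
    ext x
    rw [hSmem]
    constructor
    · rintro ⟨hxN, c, hoc, htc⟩
      rw [← hun] at hxN
      obtain ⟨_, ⟨i, rfl⟩, hxi⟩ := hxN
      obtain ⟨c₀, -, -, htc₀⟩ := hval i x hxi
      rw [htc] at htc₀
      have hji : j = Fin.castLE hmhi i := congrArg Prod.fst (Consumer.tc.inj htc₀)
      have hie : (⟨(j : ℕ), hj⟩ : Fin m) = i := by
        apply Fin.ext
        simp [hji]
      rwa [hie]
    · intro hx
      obtain ⟨c, hoc, -, htc⟩ := hval _ x hx
      refine ⟨hmem _ x hx, c, hoc, ?_⟩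
      rw [htc]
      have hcast : Fin.castLE hmhi (⟨(j : ℕ), hj⟩ : Fin m) = j := Fin.ext rfl
      rw [hcast]
  have hSempty : ∀ j : Fin hi, ¬ (j : ℕ) < m → S j = ∅ := by
    intro j hj
    ext x
    simp only [Set.mem_empty_iff_false, iff_false]
    rw [hSmem]
    rintro ⟨hxN, c, -, htc⟩
    rw [← hun] at hxN
    obtain ⟨_, ⟨i, rfl⟩, hxi⟩ := hxN
    obtain ⟨c₀, -, -, htc₀⟩ := hval i x hxi
    rw [htc] at htc₀
    have hji : j = Fin.castLE hmhi i := congrArg Prod.fst (Consumer.tc.inj htc₀)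
    rw [hji] at hj
    exact hj (by simpa using i.2)
  have hsatcopy : ∀ (j : Fin hi) (hj : (j : ℕ) < m),
      Sat w' (E.rename fun c => ((j : Fin hi), c)) (f ⟨(j : ℕ), hj⟩) := by
    intro j hj
    have hinj : Function.Injective (fun c : C => ((j : Fin hi), c)) := by
      intro a b hab; simpa using hab
    have h1 := sat_rename hinj E (f ⟨(j : ℕ), hj⟩) (hs ⟨(j : ℕ), hj⟩)
    refine sat_congr (E.rename fun c => ((j : Fin hi), c)) (f ⟨(j : ℕ), hj⟩) ?_ h1
    intro x hx
    obtain ⟨c, -, hwc, htc⟩ := hval _ x hx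
    show Consumer.rename (fun c => ((j : Fin hi), c)) (w x) = w' x
    rw [hwc, htc]
    have hcast : Fin.castLE hmhi (⟨(j : ℕ), hj⟩ : Fin m) = j := Fin.ext rfl
    rw [hcast]
    rfl
  refine ⟨w', ?_, ?_⟩
  · intro x hx
    rw [← hun] at hx
    obtain ⟨_, ⟨i, rfl⟩, hxi⟩ := hx
    obtain ⟨c, hoc, -, htc⟩ := hval i x hxi
    exact ⟨(Fin.castLE hmhi i, c), (occursIn_unfold E lo _).2 hoc, htc⟩
  · show Sat w' (groupList ((List.finRange hi).map g)) Neigh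
    refine (sat_groupList _ Neigh).2 ⟨?_, ?_⟩
    · rw [unfold_biUnion g (fun e => exprEdges w' e Neigh)]
      apply Set.Subset.antisymm
      · intro x hx
        rw [← hun] at hx
        obtain ⟨_, ⟨i, rfl⟩, hxi⟩ := hx
        have hj : ((Fin.castLE hmhi i : Fin hi) : ℕ) < m := by simpa using i.2
        refine Set.mem_iUnion.2 ⟨Fin.castLE hmhi i, ?_⟩
        show x ∈ S (Fin.castLE hmhi i)
        rw [hSeq _ hj]
        have hie : (⟨((Fin.castLE hmhi i : Fin hi) : ℕ), hj⟩ : Fin m) = i := Fin.ext rfl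
        rwa [hie]
      · exact Set.iUnion_subset fun j => exprEdges_subset _ _ _
    · intro e' he'
      obtain ⟨j, -, rfl⟩ := List.mem_map.1 he'
      show Sat w' (g j) (S j)
      by_cases hj : (j : ℕ) < m
      · rw [hSeq j hj]
        by_cases hjl : (j : ℕ) < lo
        · have hgj : g j = E.rename (fun c => (j, c)) := by rw [hg]; simp [hjl]
          rw [hgj]
          exact hsatcopy j hj
        · have hgj : g j = SExpr.rep (E.rename fun c => (j, c)) 0 1 := by
            rw [hg]; simp [hjl]
          rw [hgj]
          refine ⟨1, Nat.zero_le _, by norm_num, fun _ => f ⟨(j : ℕ), hj⟩, ?_, ?_, ?_⟩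
          · intro a b hab; exact absurd (Subsingleton.elim a b) hab
          · exact Set.iUnion_eq_const fun _ => rfl
          · intro _; exact hsatcopy j hj
      · rw [hSempty j hj]
        have hjl : ¬ (j : ℕ) < lo := fun h => hj (lt_of_lt_of_le h hlom)
        have hgj : g j = SExpr.rep (E.rename fun c => (j, c)) 0 1 := by
          rw [hg]; simp [hjl]
        rw [hgj]
        refine ⟨0, le_refl _, by norm_num, fun i => i.elim0, ?_, ?_, ?_⟩
        · intro a; exact a.elim0
        · simp
        · intro a; exact a.elim0

end Aux

/-- for every set `Neigh` of neighbourhood edges, `Neigh` can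
be matched against `E[lo;hi]` (by some witness into the consumers of the
occurrences of `E`) iff it can be matched against the unfolding `U` (by some
witness into the consumers of the occurrences of `U`); moreover, from a witness
`w'` for `U` the witness `π ∘ w'` works for `E[lo;hi]`, where `π` projects the
copied occurrences back to the original ones. -/
theorem statement_8 {N P C : Type} (E : SExpr C) (lo hi : ℕ) (hle : lo ≤ hi) :
    ∀ Neigh : Set (Edge N P),
      ((∃ w : Edge N P → Consumer C P,
          (∀ e ∈ Neigh, ∃ c, occursIn c E ∧ w e = Consumer.tc c) ∧
          Sat w (SExpr.rep E lo (hi : ℕ∞)) Neigh) ↔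
        (∃ w' : Edge N P → Consumer (Fin hi × C) P,
          (∀ e ∈ Neigh, ∃ c', occursIn c' (unfoldExpr E lo hi) ∧ w' e = Consumer.tc c') ∧
          Sat w' (unfoldExpr E lo hi) Neigh)) ∧
      (∀ w' : Edge N P → Consumer (Fin hi × C) P,
        (∀ e ∈ Neigh, ∃ c', occursIn c' (unfoldExpr E lo hi) ∧ w' e = Consumer.tc c') →
        Sat w' (unfoldExpr E lo hi) Neigh →
        Sat (fun e => Consumer.rename Prod.snd (w' e)) (SExpr.rep E lo (hi : ℕ∞)) Neigh) := by
  intro Neigh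
  constructor
  · constructor
    · rintro ⟨w, hside, hsat⟩
      exact rep_to_unfold E lo hi hle Neigh w hside hsat
    · rintro ⟨w', hside', hsat'⟩
      refine ⟨fun e => Consumer.rename Prod.snd (w' e), ?_,
        unfold_to_rep E lo hi hle Neigh w' hside' hsat'⟩
      intro e he
      obtain ⟨c', hoc', htc'⟩ := hside' e he
      refine ⟨c'.2, (occursIn_unfold E lo c').1 hoc', ?_⟩
      show Consumer.rename Prod.snd (w' e) = Consumer.tc c'.2
      rw [htc']
      rfl
  · intro w' hside' hsat'
    exact unfold_to_rep E lo hi hle Neigh w' hside' hsat'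
end
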